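/- arXiv:1812.05909 — 3 statements merged into one kernel-verified Lean document; each statement's English description precedes it below -/
import Mathlib

section
/- Let X be a real random variable with E|X| ∈ (0,∞), EX = 0, and define π₊(dx) = (2/E|X|)·1_{x ≥ 0}·P(X > x) dx on [0,∞). Define the Markov kernel Q on [0,∞) by Q(x, dy) = P(X ∈ dy + x | X ≥ x) whenever P(X ≥ x) > 0, and Q(x, ·) = δ₀ otherwise. Then Q is reversible with respect to π₊: the measure π₊(dx) Q(x, dy) on [0,∞)² is symmetric in (x, y). -/
open MeasureTheory Classical

section Aux

variable {Ω : Type*} [MeasurableSpace Ω] (μ : Measure Ω) [IsProbabilityMeasure μ]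

private lemma key_repr
    (X : Ω → ℝ) (hX : Measurable X)
    (π : Measure ℝ)
    (hπ : π = volume.withDensity
      (fun x => ENNReal.ofReal (2 / ∫ ω, |X ω| ∂μ) *
        Set.indicator (Set.Ici (0:ℝ)) (fun y => μ {ω | y < X ω}) x))
    (Q : ℝ → Set ℝ → ENNReal)
    (hQ : ∀ x B, Q x B =
      if μ {ω | x ≤ X ω} ≠ 0 then
        μ {ω | X ω - x ∈ B ∧ x ≤ X ω} / μ {ω | x ≤ X ω}
      else (if (0:ℝ) ∈ B then 1 else 0))
    (A B : Set ℝ) (hA : MeasurableSet A) (hB : MeasurableSet B)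
    (hA0 : A ⊆ Set.Ici (0:ℝ)) (hB0 : B ⊆ Set.Ici (0:ℝ)) :
    ∫⁻ x in A, Q x B ∂π =
      ENNReal.ofReal (2 / ∫ ω, |X ω| ∂μ) *
        ∫⁻ ω, ∫⁻ x, A.indicator 1 x * B.indicator 1 (X ω - x) ∂volume ∂μ := by
  set c : ENNReal := ENNReal.ofReal (2 / ∫ ω, |X ω| ∂μ) with hc
  set F : ℝ → ENNReal := fun x => μ {ω | x < X ω} with hF
  set G : ℝ → ENNReal := fun x => μ {ω | x ≤ X ω} with hG
  have hFmeas : Measurable F := by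
    apply Antitone.measurable
    intro a b hab
    exact measure_mono fun ω hω => lt_of_le_of_lt hab hω
  have hd : Measurable (fun x => c * Set.indicator (Set.Ici (0:ℝ)) F x) :=
    (measurable_const.mul (hFmeas.indicator measurableSet_Ici))
  have hdfin : ∀ᵐ x ∂(volume.restrict A), (fun x => c * Set.indicator (Set.Ici (0:ℝ)) F x) x < ⊤ := by
    filter_upwards with x
    refine ENNReal.mul_lt_top ENNReal.ofReal_lt_top ?_
    refine lt_of_le_of_lt (le_trans (Set.indicator_le_self _ _ x) ?_) ENNReal.one_lt_top
    exact prob_le_one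
  -- rewrite the withDensity integral
  have h1 : ∫⁻ x in A, Q x B ∂π
      = ∫⁻ x in A, (c * Set.indicator (Set.Ici (0:ℝ)) F x) * Q x B ∂volume := by
    rw [hπ, restrict_withDensity hA,
      lintegral_withDensity_eq_lintegral_mul_non_measurable _ hd hdfin]
    rfl
  rw [h1]
  -- drop the indicator on A
  have h2 : ∫⁻ x in A, (c * Set.indicator (Set.Ici (0:ℝ)) F x) * Q x B ∂volume
      = ∫⁻ x in A, c * (F x * Q x B) ∂volume := by
    refine setLIntegral_congr_fun hA ?_
    intro x hx; dsimp only
    rw [Set.indicator_of_mem (hA0 hx), mul_assoc]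
  rw [h2, lintegral_const_mul' c _ ENNReal.ofReal_ne_top]
  -- the a.e. identity  F x * Q x B = μ {ω | X ω - x ∈ B}
  have hFG : ∀ᵐ x ∂(volume : Measure ℝ), F x = G x := by
    have := (meas_le_ae_eq_meas_lt μ (volume : Measure ℝ) X).symm
    filter_upwards [this] with x hx
    exact hx
  have h3 : ∫⁻ x in A, F x * Q x B ∂volume
      = ∫⁻ x in A, μ {ω | X ω - x ∈ B} ∂volume := by
    refine lintegral_congr_ae (ae_restrict_of_ae ?_)
    filter_upwards [hFG] with x hx
    have hset : {ω | X ω - x ∈ B ∧ x ≤ X ω} = {ω | X ω - x ∈ B} := by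
      ext ω
      simp only [Set.mem_setOf_eq, and_iff_left_iff_imp]
      intro hmem
      have : (0:ℝ) ≤ X ω - x := hB0 hmem
      linarith
    by_cases hGx : G x = 0
    · have hF0 : F x = 0 := by rw [hx]; exact hGx
      have hμ0 : μ {ω | X ω - x ∈ B} = 0 := by
        refine measure_mono_null ?_ hGx
        intro ω hω
        have h0 : (0:ℝ) ≤ X ω - x := hB0 hω
        show x ≤ X ω
        linarith
      rw [hF0, hμ0, zero_mul]
    · rw [hQ, if_pos hGx, hx, hset]
      exact ENNReal.mul_div_cancel hGx (measure_ne_top μ _)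
  rw [h3]
  -- Tonelli
  congr 1
  have h4 : ∀ x : ℝ, μ {ω | X ω - x ∈ B} = ∫⁻ ω, B.indicator 1 (X ω - x) ∂μ := by
    intro x
    exact ((lintegral_indicator_const_comp (hX.sub measurable_const) hB 1).trans
      (one_mul _)).symm
  calc ∫⁻ x in A, μ {ω | X ω - x ∈ B} ∂volume
      = ∫⁻ x, A.indicator 1 x * μ {ω | X ω - x ∈ B} ∂volume := by
        rw [← lintegral_indicator hA]
        congr 1
        ext x
        by_cases hx : x ∈ A <;> simp [hx]
    _ = ∫⁻ x, ∫⁻ ω, A.indicator 1 x * B.indicator 1 (X ω - x) ∂μ ∂volume := by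
        refine lintegral_congr fun x => ?_
        have hne : A.indicator (1 : ℝ → ENNReal) x ≠ ⊤ := by
          by_cases hx : x ∈ A <;> simp [hx]
        rw [h4 x, ← lintegral_const_mul' _ _ hne]
    _ = ∫⁻ ω, ∫⁻ x, A.indicator 1 x * B.indicator 1 (X ω - x) ∂volume ∂μ := by
        refine lintegral_lintegral_swap ?_
        apply Measurable.aemeasurable
        apply Measurable.mul
        · exact ((measurable_one.indicator hA).comp measurable_fst)
        · exact ((measurable_one.indicator hB).comp ((hX.comp measurable_snd).sub measurable_fst))

end Aux

/-- Let `X` be a mean-zero integrable real random variable with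
`E|X| ∈ (0,∞)` and let `π₊(dx) = (2/E|X|)·1_{x ≥ 0}·P(X > x) dx`.  Define the kernel `Q`
on `[0,∞)` by `Q(x, B) = P(X − x ∈ B | X ≥ x)` when `P(X ≥ x) > 0` and `Q(x, ·) = δ₀`
otherwise.  Then `Q` is reversible with respect to `π₊`:
`∫_A Q(x, B) π₊(dx) = ∫_B Q(y, A) π₊(dy)` for all Borel `A, B ⊆ [0,∞)`. -/
theorem upcrossing_kernel_reversible
    {Ω : Type*} [MeasurableSpace Ω] (μ : Measure Ω) [IsProbabilityMeasure μ]
    (X : Ω → ℝ) (hX : Measurable X) (hInt : Integrable X μ)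
    (hpos : 0 < ∫ ω, |X ω| ∂μ) (hmean : ∫ ω, X ω ∂μ = 0)
    (π : Measure ℝ)
    (hπ : π = volume.withDensity
      (fun x => ENNReal.ofReal (2 / ∫ ω, |X ω| ∂μ) *
        Set.indicator (Set.Ici (0:ℝ)) (fun y => μ {ω | y < X ω}) x))
    (Q : ℝ → Set ℝ → ENNReal)
    (hQ : ∀ x B, Q x B =
      if μ {ω | x ≤ X ω} ≠ 0 then
        μ {ω | X ω - x ∈ B ∧ x ≤ X ω} / μ {ω | x ≤ X ω}
      else (if (0:ℝ) ∈ B then 1 else 0)) :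
    ∀ A B : Set ℝ, MeasurableSet A → MeasurableSet B →
      A ⊆ Set.Ici (0:ℝ) → B ⊆ Set.Ici (0:ℝ) →
      ∫⁻ x in A, Q x B ∂π = ∫⁻ y in B, Q y A ∂π := by
  intro A B hA hB hA0 hB0
  rw [key_repr μ X hX π hπ Q hQ A B hA hB hA0 hB0,
      key_repr μ X hX π hπ Q hQ B A hB hA hB0 hA0]
  congr 1
  refine lintegral_congr fun ω => ?_
  -- substitute x ↦ X ω - x
  have hmp : MeasurePreserving (fun x : ℝ => X ω - x) volume volume :=
    Measure.measurePreserving_sub_left volume (X ω)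
  have hmeas : Measurable (fun x : ℝ => B.indicator (1 : ℝ → ENNReal) x * A.indicator (1 : ℝ → ENNReal) (X ω - x)) := by
    apply Measurable.mul (measurable_one.indicator hB)
    exact (measurable_one.indicator hA).comp (measurable_id.const_sub (X ω))
  calc ∫⁻ x, A.indicator 1 x * B.indicator 1 (X ω - x) ∂volume
      = ∫⁻ x, B.indicator 1 (X ω - x) * A.indicator 1 (X ω - (X ω - x)) ∂volume := by
        refine lintegral_congr fun x => ?_
        rw [sub_sub_cancel, mul_comm]
    _ = ∫⁻ x, B.indicator 1 x * A.indicator 1 (X ω - x) ∂volume :=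
        hmp.lintegral_comp hmeas
end

section
/- Let S'_n = X₁ + ⋯ + X_n be a random walk started at 0 with i.i.d. increments, and suppose P^s(S'_k ∈ ℝ) = ρ < 1 for some k ≥ 1, where μ^s denotes the singular part of a measure with respect to Lebesgue measure. Then for every m ≥ 1, P^s(S'_m ∈ ℝ) ≤ ρ^{⌊m/k⌋}. In particular the total mass of the singular part of the law of S'_m decays geometrically in m. -/
open MeasureTheory ProbabilityTheory

theorem aux_map_add_conv {Ω : Type*} [MeasurableSpace Ω] (μ : Measure Ω) [IsProbabilityMeasure μ]
    {f g : Ω → ℝ} (hf : Measurable f) (hg : Measurable g) (h : IndepFun f g μ) :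
    Measure.map (fun ω => f ω + g ω) μ
      = Measure.conv (Measure.map f μ) (Measure.map g μ) := by
  simp only [Measure.conv]
  rw [← (indepFun_iff_map_prod_eq_prod_map_map hf.aemeasurable hg.aemeasurable).1 h,
    Measure.map_map measurable_add (hf.prodMk hg)]
  rfl

theorem aux_conv_ac (μ ν : Measure ℝ) [SFinite μ] [SFinite ν] (h : μ ≪ volume) :
    Measure.conv ν μ ≪ volume := by
  refine Measure.AbsolutelyContinuous.mk fun A hA hA0 => ?_
  simp only [Measure.conv]
  rw [Measure.map_apply measurable_add hA, Measure.prod_apply (measurable_add hA)]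
  have : ∀ x : ℝ, μ (Prod.mk x ⁻¹' ((fun p : ℝ × ℝ => p.1 + p.2) ⁻¹' A)) = 0 := by
    intro x
    apply h
    have : Prod.mk x ⁻¹' ((fun p : ℝ × ℝ => p.1 + p.2) ⁻¹' A) = (fun y => x + y) ⁻¹' A := rfl
    rw [this, measure_preimage_add]
    exact hA0
  simp [this]

theorem aux_conv_ac' (μ ν : Measure ℝ) [SFinite μ] [SFinite ν] (h : μ ≪ volume) :
    Measure.conv μ ν ≪ volume := by
  rw [Measure.conv_comm]; exact aux_conv_ac μ ν h

theorem aux_conv_mass (μ ν : Measure ℝ) [SFinite μ] [SFinite ν] :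
    Measure.conv μ ν Set.univ = μ Set.univ * ν Set.univ := by
  simp only [Measure.conv]
  rw [Measure.map_apply measurable_add MeasurableSet.univ]
  simp only [Set.preimage_univ]
  rw [← Set.univ_prod_univ, Measure.prod_prod]

theorem aux_sing_conv (μ ν : Measure ℝ) [IsFiniteMeasure μ] [IsFiniteMeasure ν] :
    (Measure.conv μ ν).singularPart volume Set.univ
      ≤ μ.singularPart volume Set.univ * ν.singularPart volume Set.univ := by
  set μs := μ.singularPart volume with hμs
  set νs := ν.singularPart volume with hνs
  set μa := volume.withDensity (μ.rnDeriv volume) with hμa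
  set νa := volume.withDensity (ν.rnDeriv volume) with hνa
  have hμd : μs + μa = μ := Measure.singularPart_add_rnDeriv μ volume
  have hνd : νs + νa = ν := Measure.singularPart_add_rnDeriv ν volume
  have hsplit : Measure.conv μ ν
      = Measure.conv μs νs + (Measure.conv μs νa + (Measure.conv μa νs + Measure.conv μa νa)) := by
    rw [← hμd, ← hνd, Measure.add_conv, Measure.conv_add, Measure.conv_add]
    abel
  have hac1 : Measure.conv μs νa ≪ volume :=
    aux_conv_ac _ _ (withDensity_absolutelyContinuous _ _)
  have hac2 : Measure.conv μa νs ≪ volume :=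
    aux_conv_ac' _ _ (withDensity_absolutelyContinuous _ _)
  have hac3 : Measure.conv μa νa ≪ volume :=
    aux_conv_ac _ _ (withDensity_absolutelyContinuous _ _)
  haveI : IsFiniteMeasure μa := by rw [hμa]; infer_instance
  haveI : IsFiniteMeasure νa := by rw [hνa]; infer_instance
  haveI : IsFiniteMeasure (Measure.conv μs νa) := Measure.finite_of_finite_conv _ _
  haveI : IsFiniteMeasure (Measure.conv μa νs) := Measure.finite_of_finite_conv _ _
  haveI : IsFiniteMeasure (Measure.conv μa νa) := Measure.finite_of_finite_conv _ _
  haveI : IsFiniteMeasure (Measure.conv μs νs) := Measure.finite_of_finite_conv _ _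
  haveI : (Measure.conv μs νa + (Measure.conv μa νs + Measure.conv μa νa)).HaveLebesgueDecomposition
    volume := Measure.haveLebesgueDecomposition_of_sigmaFinite _ _
  have : (Measure.conv μ ν).singularPart volume
      = (Measure.conv μs νs).singularPart volume := by
    rw [hsplit, Measure.singularPart_add, Measure.singularPart_add, Measure.singularPart_add,
      Measure.singularPart_eq_zero_of_ac hac1, Measure.singularPart_eq_zero_of_ac hac2,
      Measure.singularPart_eq_zero_of_ac hac3]
    simp
  rw [this]
  calc (Measure.conv μs νs).singularPart volume Set.univ
      ≤ Measure.conv μs νs Set.univ := Measure.singularPart_le _ _ _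
    _ = μs Set.univ * νs Set.univ := aux_conv_mass _ _

/-- Let `S'_m = X₁ + ⋯ + X_m` be a zero-started random walk with i.i.d.
increments and suppose the total mass `ρ` of the singular part (w.r.t. Lebesgue measure)
of the law of `S'_k` satisfies `ρ < 1` for some `k ≥ 1`.  Then for every `m ≥ 1` the
total mass of the singular part of the law of `S'_m` is at most `ρ^⌊m/k⌋`: it decays
geometrically in `m`. -/
theorem singular_part_geometric_decay
    {Ω : Type*} [MeasurableSpace Ω] (μ : Measure Ω) [IsProbabilityMeasure μ]
    (X : ℕ → Ω → ℝ) (hXmeas : ∀ i, Measurable (X i))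
    (hIndep : iIndepFun X μ)
    (hIdent : ∀ i, Measure.map (X i) μ = Measure.map (X 0) μ)
    (k : ℕ) (hk : 1 ≤ k) (ρ : ENNReal)
    (hρ : ((Measure.map (fun ω => ∑ i ∈ Finset.range k, X i ω) μ).singularPart
      volume) Set.univ = ρ)
    (hρlt : ρ < 1) :
    ∀ m : ℕ, 1 ≤ m →
      ((Measure.map (fun ω => ∑ i ∈ Finset.range m, X i ω) μ).singularPart
        volume) Set.univ ≤ ρ ^ (m / k) := by
  classical
  set ν : ℕ → Measure ℝ := fun n => Measure.map (fun ω => ∑ i ∈ Finset.range n, X i ω) μ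
    with hν
  have hSmeas : ∀ a b : ℕ, Measurable (fun ω => ∑ i ∈ Finset.range b, X (a + i) ω) :=
    fun a b => Finset.measurable_sum _ fun i _ => hXmeas (a + i)
  have hSmeas' : ∀ n : ℕ, Measurable (fun ω => ∑ i ∈ Finset.range n, X i ω) :=
    fun n => Finset.measurable_sum _ fun i _ => hXmeas i
  have hprob : ∀ n, IsProbabilityMeasure (ν n) := fun n =>
    Measure.isProbabilityMeasure_map (hSmeas' n).aemeasurable
  set η : Measure ℝ := Measure.map (X 0) μ with hη
  have hηprob : IsProbabilityMeasure η := Measure.isProbabilityMeasure_map (hXmeas 0).aemeasurable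
  -- the law of any block of b consecutive increments equals ν b
  have hblock : ∀ b a : ℕ,
      Measure.map (fun ω => ∑ i ∈ Finset.range b, X (a + i) ω) μ = ν b := by
    intro b
    induction b with
    | zero => intro a; simp [hν]
    | succ b ih =>
      have key : ∀ a : ℕ,
          Measure.map (fun ω => ∑ i ∈ Finset.range (b + 1), X (a + i) ω) μ
            = Measure.conv (ν b) η := by
        intro a
        have hnot : a + b ∉ (Finset.range b).image (a + ·) := by
          simp only [Finset.mem_image, Finset.mem_range]
          rintro ⟨y, hy, hxy⟩; omega
        have hind0 := hIndep.indepFun_finset_sum_of_notMem hXmeas hnot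
        have hfe : (∑ j ∈ (Finset.range b).image (a + ·), X j)
            = fun ω => ∑ i ∈ Finset.range b, X (a + i) ω := by
          funext ω
          rw [Finset.sum_apply]
          exact Finset.sum_image (fun x _ y _ h => by omega)
        rw [hfe] at hind0
        have he : (fun ω => ∑ i ∈ Finset.range (b + 1), X (a + i) ω)
            = fun ω => (∑ i ∈ Finset.range b, X (a + i) ω) + X (a + b) ω := by
          funext ω; exact Finset.sum_range_succ _ b
        rw [he, aux_map_add_conv μ (hSmeas a b) (hXmeas (a + b)) hind0, ih a, hIdent (a + b)]
      intro a
      rw [key a]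
      have h0 : ν (b + 1)
          = Measure.map (fun ω => ∑ i ∈ Finset.range (b + 1), X (0 + i) ω) μ := by
        simp only [hν, Nat.zero_add]
      rw [h0, key 0]
  -- the law of a sum splits as a convolution
  have hconv : ∀ a b : ℕ, ν (a + b) = Measure.conv (ν a) (ν b) := by
    intro a b
    have hdisj : Disjoint (Finset.range a) ((Finset.range b).image (a + ·)) := by
      rw [Finset.disjoint_left]
      intro x hx hx'
      simp only [Finset.mem_range] at hx
      simp only [Finset.mem_image, Finset.mem_range] at hx'
      obtain ⟨y, hy, rfl⟩ := hx'; omega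
    have base := hIndep.indepFun_finset (Finset.range a) ((Finset.range b).image (a + ·))
      hdisj hXmeas
    have hφmeas : ∀ s : Finset ℕ, Measurable fun v : (i : s) → ℝ => ∑ i, v i :=
      fun s => Finset.measurable_sum _ fun i _ => measurable_pi_apply i
    have hind := base.comp (hφmeas (Finset.range a)) (hφmeas ((Finset.range b).image (a + ·)))
    have hl : ((fun v : (i : Finset.range a) → ℝ => ∑ i, v i)
          ∘ fun ω (i : Finset.range a) => X i ω)
        = fun ω => ∑ i ∈ Finset.range a, X i ω := by
      funext ω
      simp only [Function.comp_apply]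
      exact Finset.sum_coe_sort (Finset.range a) (fun i => X i ω)
    have hr : ((fun v : (i : (Finset.range b).image (a + ·)) → ℝ => ∑ i, v i)
          ∘ fun ω (i : (Finset.range b).image (a + ·)) => X i ω)
        = fun ω => ∑ i ∈ Finset.range b, X (a + i) ω := by
      funext ω
      simp only [Function.comp_apply]
      rw [Finset.sum_coe_sort ((Finset.range b).image (a + ·)) (fun i => X i ω)]
      exact Finset.sum_image (fun x _ y _ h => by omega)
    rw [hl, hr] at hind
    have he : (fun ω => ∑ i ∈ Finset.range (a + b), X i ω)
        = fun ω => (∑ i ∈ Finset.range a, X i ω) + ∑ i ∈ Finset.range b, X (a + i) ω := by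
      funext ω; exact Finset.sum_range_add _ a b
    calc ν (a + b) = Measure.map (fun ω =>
          (∑ i ∈ Finset.range a, X i ω) + ∑ i ∈ Finset.range b, X (a + i) ω) μ := by
          rw [hν]; exact congrArg (fun f => Measure.map f μ) he
      _ = Measure.conv (Measure.map (fun ω => ∑ i ∈ Finset.range a, X i ω) μ)
            (Measure.map (fun ω => ∑ i ∈ Finset.range b, X (a + i) ω) μ) :=
          aux_map_add_conv μ (hSmeas' a) (hSmeas a b) hind
      _ = Measure.conv (ν a) (ν b) := by rw [hblock b a]
  -- mass of the singular part
  set f : ℕ → ENNReal := fun n => (ν n).singularPart volume Set.univ with hf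
  have hfsub : ∀ a b : ℕ, f (a + b) ≤ f a * f b := by
    intro a b
    have := hprob a; have := hprob b
    rw [hf]
    simp only
    rw [hconv a b]
    exact aux_sing_conv (ν a) (ν b)
  have hfone : ∀ n, f n ≤ 1 := by
    intro n
    have := hprob n
    calc f n ≤ ν n Set.univ := Measure.singularPart_le _ _ _
      _ = 1 := measure_univ
  have hfk : f k = ρ := hρ
  have key : ∀ q r : ℕ, f (q * k + r) ≤ ρ ^ q := by
    intro q
    induction q with
    | zero => intro r; simpa using hfone r
    | succ q ih =>
      intro r
      have he : (q + 1) * k + r = k + (q * k + r) := by ring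
      calc f ((q + 1) * k + r) = f (k + (q * k + r)) := by rw [he]
        _ ≤ f k * f (q * k + r) := hfsub _ _
        _ ≤ ρ * ρ ^ q := mul_le_mul' (le_of_eq hfk) (ih r)
        _ = ρ ^ (q + 1) := (pow_succ ρ q).symm ▸ (mul_comm ρ (ρ ^ q))
  intro m _
  have hm : m / k * k + m % k = m := by
    rw [Nat.mul_comm]; exact Nat.div_add_mod m k
  have := key (m / k) (m % k)
  rw [hm] at this
  exact this
end

section
/- Let S be an integer-valued random walk with i.i.d. increments whose state space group is ℤ (span d = 1), started at x ∈ ℤ, and suppose EX₁ = 0 with E|X₁| ∈ (0,∞). Let T₁ = inf{k ≥ 1 : S_{k−1} < 0, S_k ≥ 0} be the first up-crossing time of level 0 and O₁ = S_{T₁} the overshoot. Then for every y ∈ {z ∈ ℤ, z ≥ 0 : P(X₁ > z) > 0}, we have P_x(O₁ = y) > 0. -/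
open MeasureTheory ProbabilityTheory

/-- Sum of a list prefix equals a `Finset.range` sum of `getD`. -/
private lemma sum_take_eq_range (l : List ℤ) (k : ℕ) :
    (l.take k).sum = ∑ i ∈ Finset.range k, l.getD i 0 := by
  induction k with
  | zero => simp
  | succ k ih =>
    rw [Finset.sum_range_succ, ← ih, List.take_succ, List.sum_append]
    congr 1
    by_cases h : k < l.length
    · rw [List.getElem?_eq_getElem h, List.getD_eq_getElem _ _ h]; simp
    · push_neg at h
      rw [List.getElem?_eq_none h, List.getD_eq_default _ _ h]; simp

/-- If a set of integers contains a positive and a negative element and generates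
`ℤ` as a group, then every integer is a sum of a finite list of its elements. -/
private lemma mem_addSubmonoid_closure (A : Set ℤ) (p q : ℤ) (hp : p ∈ A) (hp0 : 0 < p)
    (hq : q ∈ A) (hq0 : q < 0) (hA : AddSubgroup.closure A = ⊤) (m : ℤ) :
    m ∈ AddSubmonoid.closure A := by
  set M := AddSubmonoid.closure A with hM
  have hpM : p ∈ M := AddSubmonoid.subset_closure hp
  have hqM : q ∈ M := AddSubmonoid.subset_closure hq
  have hneg : ∀ a ∈ A, -a ∈ M := by
    intro a ha
    have haM : a ∈ M := AddSubmonoid.subset_closure ha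
    rcases lt_trichotomy a 0 with h | h | h
    · have key : -a = (-a).toNat • p + (p - 1).toNat • a := by
        have h1 : ((-a).toNat : ℤ) = -a := Int.toNat_of_nonneg (by omega)
        have h2 : (((p - 1).toNat) : ℤ) = p - 1 := Int.toNat_of_nonneg (by omega)
        rw [nsmul_eq_mul, nsmul_eq_mul, h1, h2]; ring
      rw [key]
      exact add_mem (AddSubmonoid.nsmul_mem _ hpM _) (AddSubmonoid.nsmul_mem _ haM _)
    · rw [h, neg_zero]; exact zero_mem M
    · have key : -a = a.toNat • q + (-q - 1).toNat • a := by
        have h1 : ((a.toNat) : ℤ) = a := Int.toNat_of_nonneg (by omega)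
        have h2 : (((-q - 1).toNat) : ℤ) = -q - 1 := Int.toNat_of_nonneg (by omega)
        rw [nsmul_eq_mul, nsmul_eq_mul, h1, h2]; ring
      rw [key]
      exact add_mem (AddSubmonoid.nsmul_mem _ hqM _) (AddSubmonoid.nsmul_mem _ haM _)
  let G : AddSubgroup ℤ :=
    { carrier := {m : ℤ | m ∈ M ∧ -m ∈ M}
      zero_mem' := ⟨zero_mem M, by simpa using zero_mem M⟩
      add_mem' := fun {a b} ha hb =>
        ⟨add_mem ha.1 hb.1, by rw [neg_add]; exact add_mem ha.2 hb.2⟩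
      neg_mem' := fun {a} ha => ⟨ha.2, by simpa using ha.1⟩ }
  have hle : AddSubgroup.closure A ≤ G :=
    (AddSubgroup.closure_le G).mpr fun a ha => ⟨AddSubmonoid.subset_closure ha, hneg a ha⟩
  have hmG : m ∈ G := hle (hA ▸ AddSubgroup.mem_top m)
  exact hmG.1

/-- If an event phrased in terms of an integer-valued random variable has nonzero
probability, there is an atom realizing the defining property. -/
private lemma exists_atom {Ω : Type*} [MeasurableSpace Ω] (μ : Measure Ω)
    (Y : Ω → ℤ) (P : ℤ → Prop) (h : μ {ω | P (Y ω)} ≠ 0) :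
    ∃ z : ℤ, P z ∧ μ {ω | Y ω = z} ≠ 0 := by
  by_contra hc
  push_neg at hc
  apply h
  have hset : {ω | P (Y ω)} = ⋃ z : {z : ℤ // P z}, {ω | Y ω = (z : ℤ)} := by
    ext ω
    simp only [Set.mem_setOf_eq, Set.mem_iUnion]
    exact ⟨fun hω => ⟨⟨Y ω, hω⟩, rfl⟩, fun ⟨z, hz⟩ => hz ▸ z.2⟩
  rw [hset]
  exact measure_iUnion_null fun z => hc z z.2

/-- Let `S` be an integer-valued mean-zero random walk started at
`x ∈ ℤ` whose increment distribution generates all of `ℤ` (span `d = 1`).  Let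
`T₁ = inf{k ≥ 1 : S_{k−1} < 0, S_k ≥ 0}` be the first up-crossing time of level `0` and
`O₁ = S_{T₁}` the overshoot.  Then for every `y ≥ 0` with `P(X₁ > y) > 0` we have
`P_x(O₁ = y) > 0`. -/
theorem arithmetic_overshoot_positive_probability
    {Ω : Type*} [MeasurableSpace Ω] (μ : Measure Ω) [IsProbabilityMeasure μ]
    (X : ℕ → Ω → ℤ) (hXmeas : ∀ i, Measurable (X i))
    (hIndep : iIndepFun X μ)
    (hIdent : ∀ i, Measure.map (X i) μ = Measure.map (X 0) μ)
    (hInt : Integrable (fun ω => (X 0 ω : ℝ)) μ)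
    (hmean : ∫ ω, (X 0 ω : ℝ) ∂μ = 0)
    (hpos : 0 < ∫ ω, |(X 0 ω : ℝ)| ∂μ)
    (hspan : AddSubgroup.closure {z : ℤ | μ {ω | X 0 ω = z} ≠ 0} = ⊤)
    (x : ℤ)
    (S : ℕ → Ω → ℤ) (hS : ∀ n ω, S n ω = x + ∑ i ∈ Finset.range n, X i ω)
    (T : Ω → ℕ)
    (hT : ∀ ω, T ω = sInf {k : ℕ | 1 ≤ k ∧ S (k - 1) ω < 0 ∧ 0 ≤ S k ω}) :
    ∀ y : ℤ, 0 ≤ y → μ {ω | y < X 0 ω} ≠ 0 →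
      0 < μ {ω | S (T ω) ω = y} := by
  intro y hy hby
  set A : Set ℤ := {z : ℤ | μ {ω | X 0 ω = z} ≠ 0} with hAdef
  -- there exists a negative atom
  have hnegp : μ {ω | X 0 ω < 0} ≠ 0 := by
    intro h0
    have hae : 0 ≤ᵐ[μ] fun ω => (X 0 ω : ℝ) := by
      rw [Filter.EventuallyLE, ae_iff]
      convert h0 using 2
      ext ω
      simp only [Set.mem_setOf_eq, Pi.zero_apply, not_le]
      exact_mod_cast Iff.rfl
    have hzero := (integral_eq_zero_iff_of_nonneg_ae hae hInt).mp hmean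
    have habs : (fun ω => |(X 0 ω : ℝ)|) =ᵐ[μ] 0 := by
      filter_upwards [hzero] with ω hω
      simp only [Pi.zero_apply] at hω ⊢
      rw [hω, abs_zero]
    rw [integral_congr_ae habs] at hpos
    simp at hpos
  obtain ⟨q, hq0, hqA⟩ := exists_atom μ (X 0) (fun z => z < 0) hnegp
  obtain ⟨b, hb0, hbA⟩ := exists_atom μ (X 0) (fun z => y < z) hby
  -- the target value just before the final jump
  set z : ℤ := y - b with hzdef
  have hzneg : z < 0 := by omega
  -- find a list of atoms summing to `z - x`
  have hzmem : (z - x) ∈ AddSubmonoid.closure A :=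
    mem_addSubmonoid_closure A b q hbA (by omega) hqA hq0 hspan _
  obtain ⟨L, hLA, hLsum⟩ := AddSubmonoid.exists_list_of_mem_closure hzmem
  -- reorder: negative steps first
  set p : ℤ → Bool := fun a => decide (a < 0) with hpdef
  set N : List ℤ := L.filter p with hNdef
  set Q : List ℤ := L.filter (fun a => !p a) with hQdef
  set L' : List ℤ := N ++ Q with hL'def
  have hperm : L'.Perm L := List.filter_append_perm p L
  have hL'sum : L'.sum = z - x := by rw [hperm.sum_eq, hLsum]
  have hL'A : ∀ a ∈ L', a ∈ A := fun a ha => hLA a (hperm.subset ha)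
  set n : ℕ := L'.length with hndef
  set m : ℕ := N.length with hmdef
  have hmn : m ≤ n := by
    rw [hndef, hL'def, List.length_append]; omega
  -- the deterministic step sequence
  set step : ℕ → ℤ := fun i => if i < n then L'.getD i 0 else b with hstepdef
  have hstepA : ∀ i, μ {ω | X 0 ω = step i} ≠ 0 := by
    intro i
    by_cases hi : i < n
    · have : step i ∈ A := by
        have : L'.getD i 0 ∈ L' := by
          rw [List.getD_eq_getElem _ _ hi]; exact List.getElem_mem hi
        simpa [hstepdef, hi] using hL'A _ this
      exact this
    · simpa [hstepdef, hi] using hbA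
  have hstepneg : ∀ i, i < m → step i < 0 := by
    intro i hi
    have hin : i < n := lt_of_lt_of_le hi hmn
    have h1 : L'.getD i 0 = N.getD i 0 := by
      rw [hL'def]; exact List.getD_append _ _ _ _ hi
    have h2 : N.getD i 0 ∈ N := by
      rw [List.getD_eq_getElem _ _ hi]; exact List.getElem_mem hi
    have h3 := List.mem_filter.mp (hNdef ▸ h2)
    have : decide (N.getD i 0 < 0) = true := h3.2
    have h4 : N.getD i 0 < 0 := of_decide_eq_true this
    have h5 : step i = N.getD i 0 := by
      simp only [hstepdef]; rw [if_pos hin, h1]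
    rw [h5]; exact h4
  have hstepnn : ∀ i, m ≤ i → i < n → 0 ≤ step i := by
    intro i him hin
    have h1 : L'.getD i 0 = Q.getD (i - m) 0 := by
      rw [hL'def]; exact List.getD_append_right _ _ _ _ him
    have hiQ : i - m < Q.length := by
      have : n = m + Q.length := by rw [hndef, hL'def, List.length_append]
      omega
    have h2 : Q.getD (i - m) 0 ∈ Q := by
      rw [List.getD_eq_getElem _ _ hiQ]; exact List.getElem_mem hiQ
    have h3 := List.mem_filter.mp (hQdef ▸ h2)
    have h4 : ¬ (Q.getD (i - m) 0 < 0) := by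
      have := h3.2
      simp only [hpdef, Bool.not_eq_true', decide_eq_false_iff_not] at this
      exact this
    have h5 : step i = Q.getD (i - m) 0 := by
      simp only [hstepdef]; rw [if_pos hin, h1]
    rw [h5]; exact le_of_not_gt h4
  -- the deterministic walk
  set g : ℕ → ℤ := fun k => x + ∑ i ∈ Finset.range k, step i with hgdef
  have hgk : ∀ k, k ≤ n → g k = x + (L'.take k).sum := by
    intro k hk
    simp only [hgdef]
    rw [sum_take_eq_range]
    congr 1
    refine Finset.sum_congr rfl fun i hi => ?_
    have : i < n := lt_of_lt_of_le (Finset.mem_range.mp hi) hk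
    simp [hstepdef, this]
  have hgn : g n = z := by
    rw [hgk n le_rfl, List.take_length, hL'sum]; ring
  have hgsucc : g (n + 1) = y := by
    simp only [hgdef]
    rw [Finset.sum_range_succ]
    have : step n = b := by simp [hstepdef]
    rw [this]
    have : x + ∑ i ∈ Finset.range n, step i = z := hgn
    omega
  -- late part of the walk stays below the endpoint
  have hlate : ∀ k, m ≤ k → k ≤ n → g k ≤ g n := by
    intro k hkm hkn
    have hsplit : ∑ i ∈ Finset.range k, step i + ∑ i ∈ Finset.Ico k n, step i
        = ∑ i ∈ Finset.range n, step i := by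
      rw [Finset.range_eq_Ico, Finset.range_eq_Ico]
      exact Finset.sum_Ico_consecutive step (Nat.zero_le k) hkn
    have hnn : 0 ≤ ∑ i ∈ Finset.Ico k n, step i := by
      refine Finset.sum_nonneg fun i hi => ?_
      obtain ⟨hi1, hi2⟩ := Finset.mem_Ico.mp hi
      exact hstepnn i (le_trans hkm hi1) hi2
    simp only [hgdef]
    omega
  -- no up-crossing before time `n + 1`
  have hno : ∀ k, 1 ≤ k → k ≤ n → ¬(g (k - 1) < 0 ∧ 0 ≤ g k) := by
    rintro k hk1 hkn ⟨h1, h2⟩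
    by_cases hkm : k ≤ m
    · have hstep := hstepneg (k - 1) (by omega)
      have hgeq : g k = g (k - 1) + step (k - 1) := by
        have hkeq : k = (k - 1) + 1 := by omega
        conv_lhs => rw [hkeq]
        simp only [hgdef, Finset.sum_range_succ]
        ring
      omega
    · push_neg at hkm
      have := hlate k (by omega) hkn
      rw [hgn] at this
      omega
  -- the event forcing this trajectory
  set E : Set Ω := ⋂ i ∈ Finset.range (n + 1), (X i) ⁻¹' {step i} with hEdef
  have hEmeas : μ E = ∏ i ∈ Finset.range (n + 1), μ ((X i) ⁻¹' {step i}) :=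
    hIndep.meas_biInter fun i _ => ⟨{step i}, measurableSet_singleton _, rfl⟩
  have hfac : ∀ i, μ ((X i) ⁻¹' {step i}) = μ {ω | X 0 ω = step i} := by
    intro i
    have h1 : μ ((X i) ⁻¹' {step i})
        = Measure.map (X i) μ {step i} := by
      rw [Measure.map_apply (hXmeas i) (measurableSet_singleton _)]
    have h2 : Measure.map (X 0) μ {step i} = μ ((X 0) ⁻¹' {step i}) :=
      Measure.map_apply (hXmeas 0) (measurableSet_singleton _)
    rw [h1, hIdent i, h2]
    rfl
  have hEpos : μ E ≠ 0 := by
    rw [hEmeas]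
    rw [Finset.prod_ne_zero_iff]
    intro i _
    rw [hfac i]
    exact hstepA i
  -- on the event, the overshoot equals y
  have hsub : E ⊆ {ω | S (T ω) ω = y} := by
    intro ω hω
    have hXω : ∀ i, i ≤ n → X i ω = step i := by
      intro i hi
      have := Set.mem_iInter₂.mp hω i (Finset.mem_range.mpr (by omega))
      simpa using this
    have hSω : ∀ k, k ≤ n + 1 → S k ω = g k := by
      intro k hk
      rw [hS k ω]
      simp only [hgdef]
      congr 1
      refine Finset.sum_congr rfl fun i hi => ?_
      exact hXω i (by have := Finset.mem_range.mp hi; omega)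
    have hTω : T ω = n + 1 := by
      rw [hT ω]
      have hmem : (n + 1) ∈ {k : ℕ | 1 ≤ k ∧ S (k - 1) ω < 0 ∧ 0 ≤ S k ω} := by
        refine ⟨by omega, ?_, ?_⟩
        · have : n + 1 - 1 = n := by omega
          rw [this, hSω n (by omega), hgn]; exact hzneg
        · rw [hSω (n + 1) le_rfl, hgsucc]; exact hy
      refine le_antisymm (Nat.sInf_le hmem) (le_csInf ⟨_, hmem⟩ ?_)
      rintro k ⟨hk1, hk2, hk3⟩
      by_contra hc
      push_neg at hc
      have hkn : k ≤ n := by omega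
      rw [hSω (k - 1) (by omega), hSω k (by omega)] at *
      exact hno k hk1 hkn ⟨hk2, hk3⟩
    show S (T ω) ω = y
    rw [hTω, hSω (n + 1) le_rfl, hgsucc]
  calc (0 : ENNReal) < μ E := pos_iff_ne_zero.mpr hEpos
    _ ≤ μ {ω | S (T ω) ω = y} := measure_mono hsub
end
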